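/- Let T be the tree consisting of the path u1u2u3u4u5 together with a pendant path u3u'3u''3 at u3 and two additional leaves v3, v'3 adjacent to u''3. If L is a list assignment with |L(u1)| ≥ 2, |L(u2)| ≥ 3, |L(u3)| ≥ 3, |L(u4)| ≥ 4, |L(u5)| ≥ 2, |L(u'3)| ≥ 5, |L(u''3)| ≥ 4, |L(v3)| ≥ 3, |L(v'3)| ≥ 2, then T admits a 2-distance L-coloring. -/

import Mathlib

/-- The tree of the corresponding configuration, with vertices 0 = u1, 1 = u2, 2 = u3, 3 = u4, 4 = u5, 5 = u'3, 6 = u''3, 7 = v3, 8 = v'3. -/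
def T10 : SimpleGraph (Fin 9) :=
  SimpleGraph.fromRel (fun u v => (u = 0 ∧ v = 1) ∨ (u = 1 ∧ v = 2) ∨ (u = 2 ∧ v = 3) ∨ (u = 3 ∧ v = 4) ∨ (u = 2 ∧ v = 5) ∨ (u = 5 ∧ v = 6) ∨ (u = 6 ∧ v = 7) ∨ (u = 6 ∧ v = 8))

instance : DecidableRel T10.Adj := fun a b => by
  unfold T10
  rw [SimpleGraph.fromRel_adj]
  infer_instance

private lemma pick_off (A S : Finset ℕ) (h : S.card < A.card) : ∃ x ∈ A, x ∉ S := by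
  have h2 := Finset.le_card_sdiff S A
  have h1 : 0 < (A \ S).card := by omega
  obtain ⟨x, hx⟩ := Finset.card_pos.mp h1
  rw [Finset.mem_sdiff] at hx
  exact ⟨x, hx.1, hx.2⟩

private lemma pick1 {A : Finset ℕ} (h : 2 ≤ A.card) (a : ℕ) : ∃ x ∈ A, x ≠ a := by
  obtain ⟨x, hxA, hx⟩ := pick_off A {a} (by rw [Finset.card_singleton]; omega)
  exact ⟨x, hxA, by simpa using hx⟩

private lemma pick2 {A : Finset ℕ} (h : 3 ≤ A.card) (a b : ℕ) : ∃ x ∈ A, x ≠ a ∧ x ≠ b := by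
  have hc : ({a, b} : Finset ℕ).card ≤ 2 := by
    have h1 : ({b} : Finset ℕ).card = 1 := Finset.card_singleton b
    have := Finset.card_insert_le a {b}
    omega
  obtain ⟨x, hxA, hx⟩ := pick_off A {a, b} (by omega)
  simp only [Finset.mem_insert, Finset.mem_singleton, not_or] at hx
  exact ⟨x, hxA, hx⟩

private lemma pick3 {A : Finset ℕ} (h : 4 ≤ A.card) (a b c : ℕ) :
    ∃ x ∈ A, x ≠ a ∧ x ≠ b ∧ x ≠ c := by
  have hc : ({a, b, c} : Finset ℕ).card ≤ 3 := by
    have h1 : ({c} : Finset ℕ).card = 1 := Finset.card_singleton c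
    have h2 := Finset.card_insert_le b {c}
    have := Finset.card_insert_le a ({b, c} : Finset ℕ)
    omega
  obtain ⟨x, hxA, hx⟩ := pick_off A {a, b, c} (by omega)
  simp only [Finset.mem_insert, Finset.mem_singleton, not_or] at hx
  exact ⟨x, hxA, hx.1, hx.2.1, hx.2.2⟩

/-- Finish the coloring: given the colors of vertices 0, 2, 4 (with the invariant needed to
color vertex 6), color the remaining vertices 1, 3, 5, 6, 7, 8. -/
private lemma finish (A1 A3 A5 A6 A7 A8 : Finset ℕ)
    (k1 : 3 ≤ A1.card) (k3 : 4 ≤ A3.card) (k5 : 5 ≤ A5.card)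
    (k6 : 4 ≤ A6.card) (k7 : 3 ≤ A7.card) (k8 : 2 ≤ A8.card)
    (c0 c2 c4 : ℕ)
    (hINV : ¬(A7 ⊆ A6 ∧ c2 ∈ A6 ∧ c2 ∉ A7 ∧ c2 ∉ A8)) :
    ∃ c1 c3 c5 c6 c7 c8,
      c1 ∈ A1 ∧ c3 ∈ A3 ∧ c5 ∈ A5 ∧ c6 ∈ A6 ∧ c7 ∈ A7 ∧ c8 ∈ A8 ∧
      c0 ≠ c1 ∧ c1 ≠ c2 ∧ c1 ≠ c3 ∧ c1 ≠ c5 ∧ c2 ≠ c3 ∧ c2 ≠ c5 ∧ c2 ≠ c6 ∧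
      c3 ≠ c4 ∧ c3 ≠ c5 ∧ c5 ≠ c6 ∧ c5 ≠ c7 ∧ c5 ≠ c8 ∧ c6 ≠ c7 ∧ c6 ≠ c8 ∧ c7 ≠ c8 := by
  obtain ⟨c1, m1, h10, h12⟩ := pick2 k1 c0 c2
  obtain ⟨c3, m3, h31, h32, h34⟩ := pick3 k3 c1 c2 c4
  have hTle : ({c1, c2, c3} : Finset ℕ).card ≤ 3 := by
    have h1 : ({c3} : Finset ℕ).card = 1 := Finset.card_singleton c3
    have h2 := Finset.card_insert_le c2 {c3}
    have := Finset.card_insert_le c1 ({c2, c3} : Finset ℕ)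
    omega
  have hS5card : 2 ≤ (A5 \ {c1, c2, c3}).card := by
    have := Finset.le_card_sdiff ({c1, c2, c3} : Finset ℕ) A5
    omega
  have hS5mem : ∀ x ∈ A5 \ {c1, c2, c3}, x ∈ A5 ∧ x ≠ c1 ∧ x ≠ c2 ∧ x ≠ c3 := by
    intro x hx
    rw [Finset.mem_sdiff] at hx
    have := hx.2
    simp only [Finset.mem_insert, Finset.mem_singleton, not_or] at this
    exact ⟨hx.1, this.1, this.2.1, this.2.2⟩
  by_cases hB1 : ((A5 \ {c1, c2, c3}) \ A6).Nonempty
  · -- B1 : some available color for 5 is not in L6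
    obtain ⟨q, hq⟩ := hB1
    rw [Finset.mem_sdiff] at hq
    obtain ⟨hq5, hq1, hq2, hq3⟩ := hS5mem q hq.1
    have hq6 := hq.2
    obtain ⟨c8, m8, h85⟩ := pick1 k8 q
    obtain ⟨c7, m7, h75, h78⟩ := pick2 k7 q c8
    obtain ⟨c6, m6, h62, h67, h68⟩ := pick3 k6 c2 c7 c8
    exact ⟨c1, c3, q, c6, c7, c8, m1, m3, hq5, m6, m7, m8,
      h10.symm, h12, h31.symm, hq1.symm, h32.symm, hq2.symm, h62.symm,
      h34, hq3.symm, fun h => hq6 (h ▸ m6), h75.symm, h85.symm, h67, h68, h78⟩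
  by_cases hB2 : (A8 \ A6).Nonempty
  · -- B2 : some color of L8 is not in L6; use it for 8
    obtain ⟨r, hr⟩ := hB2
    rw [Finset.mem_sdiff] at hr
    obtain ⟨r8, r6⟩ := hr
    obtain ⟨c5, hc5S, h5r⟩ := pick1 hS5card r
    obtain ⟨m5, h51, h52, h53⟩ := hS5mem c5 hc5S
    obtain ⟨c7, m7, h75, h7r⟩ := pick2 k7 c5 r
    obtain ⟨c6, m6, h62, h65, h67⟩ := pick3 k6 c2 c5 c7
    exact ⟨c1, c3, c5, c6, c7, r, m1, m3, m5, m6, m7, r8,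
      h10.symm, h12, h31.symm, h51.symm, h32.symm, h52.symm, h62.symm,
      h34, h53.symm, h65.symm, h75.symm, h5r, h67, fun h => r6 (h ▸ m6), h7r⟩
  -- now A8 ⊆ A6
  have h86 : A8 ⊆ A6 := by
    rw [← Finset.sdiff_eq_empty_iff_subset]
    exact Finset.not_nonempty_iff_eq_empty.mp hB2
  by_cases hB3 : (A7 \ A6).Nonempty
  · -- B3 : some color of L7 is not in L6; use it for 7
    obtain ⟨s, hs⟩ := hB3
    rw [Finset.mem_sdiff] at hs
    obtain ⟨s7, s6⟩ := hs
    obtain ⟨c5, hc5S, h5s⟩ := pick1 hS5card s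
    obtain ⟨m5, h51, h52, h53⟩ := hS5mem c5 hc5S
    obtain ⟨c8, m8, h85⟩ := pick1 k8 c5
    have h8s : c8 ≠ s := fun h => s6 (h ▸ h86 m8)
    obtain ⟨c6, m6, h62, h65, h68⟩ := pick3 k6 c2 c5 c8
    exact ⟨c1, c3, c5, c6, s, c8, m1, m3, m5, m6, s7, m8,
      h10.symm, h12, h31.symm, h51.symm, h32.symm, h52.symm, h62.symm,
      h34, h53.symm, h65.symm, h5s, h85.symm, fun h => s6 (h ▸ m6), h68, h8s.symm⟩
  have h76 : A7 ⊆ A6 := by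
    rw [← Finset.sdiff_eq_empty_iff_subset]
    exact Finset.not_nonempty_iff_eq_empty.mp hB3
  by_cases hB4 : c2 ∈ A6
  · by_cases hB5 : c2 ∈ A8
    · -- B5 : reuse c2 as the color of 8
      obtain ⟨c5, hc5S⟩ := Finset.card_pos.mp (show 0 < (A5 \ {c1, c2, c3}).card by omega)
      obtain ⟨m5, h51, h52, h53⟩ := hS5mem c5 hc5S
      obtain ⟨c7, m7, h75, h72⟩ := pick2 k7 c5 c2
      obtain ⟨c6, m6, h62, h65, h67⟩ := pick3 k6 c2 c5 c7
      exact ⟨c1, c3, c5, c6, c7, c2, m1, m3, m5, m6, m7, hB5,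
        h10.symm, h12, h31.symm, h51.symm, h32.symm, h52.symm, h62.symm,
        h34, h53.symm, h65.symm, h75.symm, h52, h67, h62, h72⟩
    · by_cases hB6 : c2 ∈ A7
      · -- B6 : reuse c2 as the color of 7
        obtain ⟨c5, hc5S⟩ := Finset.card_pos.mp (show 0 < (A5 \ {c1, c2, c3}).card by omega)
        obtain ⟨m5, h51, h52, h53⟩ := hS5mem c5 hc5S
        obtain ⟨c8, m8, h85⟩ := pick1 k8 c5
        have h28 : c2 ≠ c8 := fun h => hB5 (h ▸ m8)
        obtain ⟨c6, m6, h62, h65, h68⟩ := pick3 k6 c2 c5 c8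
        exact ⟨c1, c3, c5, c6, c2, c8, m1, m3, m5, m6, hB6, m8,
          h10.symm, h12, h31.symm, h51.symm, h32.symm, h52.symm, h62.symm,
          h34, h53.symm, h65.symm, h52, h85.symm, h62, h68, h28⟩
      · exact absurd ⟨h76, hB4, hB6, hB5⟩ hINV
  · -- B4 : c2 is not in L6 at all
    obtain ⟨c5, hc5S⟩ := Finset.card_pos.mp (show 0 < (A5 \ {c1, c2, c3}).card by omega)
    obtain ⟨m5, h51, h52, h53⟩ := hS5mem c5 hc5S
    obtain ⟨c8, m8, h85⟩ := pick1 k8 c5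
    obtain ⟨c7, m7, h75, h78⟩ := pick2 k7 c5 c8
    obtain ⟨c6, m6, h65, h67, h68⟩ := pick3 k6 c5 c7 c8
    exact ⟨c1, c3, c5, c6, c7, c8, m1, m3, m5, m6, m7, m8,
      h10.symm, h12, h31.symm, h51.symm, h32.symm, h52.symm, fun h => hB4 (h ▸ m6),
      h34, h53.symm, h65.symm, h75.symm, h85.symm, h67, h68, h78⟩

set_option synthInstance.maxSize 2000 in
set_option synthInstance.maxHeartbeats 1000000 in
set_option maxHeartbeats 1000000 in
private lemma pairs_lemma : ∀ u v : Fin 9, u ≠ v →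
    (T10.Adj u v ∨ ∃ w, T10.Adj u w ∧ T10.Adj w v) →
    ((u = 0 ∧ v = 1) ∨ (u = 1 ∧ v = 0) ∨ (u = 0 ∧ v = 2) ∨ (u = 2 ∧ v = 0) ∨
     (u = 1 ∧ v = 2) ∨ (u = 2 ∧ v = 1) ∨ (u = 1 ∧ v = 3) ∨ (u = 3 ∧ v = 1) ∨
     (u = 1 ∧ v = 5) ∨ (u = 5 ∧ v = 1) ∨ (u = 2 ∧ v = 3) ∨ (u = 3 ∧ v = 2) ∨
     (u = 2 ∧ v = 4) ∨ (u = 4 ∧ v = 2) ∨ (u = 2 ∧ v = 5) ∨ (u = 5 ∧ v = 2) ∨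
     (u = 2 ∧ v = 6) ∨ (u = 6 ∧ v = 2) ∨ (u = 3 ∧ v = 4) ∨ (u = 4 ∧ v = 3) ∨
     (u = 3 ∧ v = 5) ∨ (u = 5 ∧ v = 3) ∨ (u = 5 ∧ v = 6) ∨ (u = 6 ∧ v = 5) ∨
     (u = 5 ∧ v = 7) ∨ (u = 7 ∧ v = 5) ∨ (u = 5 ∧ v = 8) ∨ (u = 8 ∧ v = 5) ∨
     (u = 6 ∧ v = 7) ∨ (u = 7 ∧ v = 6) ∨ (u = 6 ∧ v = 8) ∨ (u = 8 ∧ v = 6) ∨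
     (u = 7 ∧ v = 8) ∨ (u = 8 ∧ v = 7)) := by decide

/-- The configuration admits a 2-distance coloring from the given lists. -/
theorem colorable_vi (L : Fin 9 → Finset ℕ)
    (h0 : 2 ≤ (L 0).card)
    (h1 : 3 ≤ (L 1).card)
    (h2 : 3 ≤ (L 2).card)
    (h3 : 4 ≤ (L 3).card)
    (h4 : 2 ≤ (L 4).card)
    (h5 : 5 ≤ (L 5).card)
    (h6 : 4 ≤ (L 6).card)
    (h7 : 3 ≤ (L 7).card)
    (h8 : 2 ≤ (L 8).card) :
    ∃ φ : Fin 9 → ℕ, (∀ v, φ v ∈ L v) ∧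
      ∀ u v : Fin 9, u ≠ v →
        (T10.Adj u v ∨ ∃ w, T10.Adj u w ∧ T10.Adj w v) → φ u ≠ φ v := by
  -- shrink the lists of vertices 2, 6, 7 to exact sizes
  obtain ⟨A2, hA2sub, hA2card⟩ := Finset.exists_subset_card_eq h2
  obtain ⟨A6, hA6sub, hA6card⟩ := Finset.exists_subset_card_eq h6
  obtain ⟨A7, hA7sub, hA7card⟩ := Finset.exists_subset_card_eq h7
  have kA2 : 3 ≤ A2.card := hA2card.ge
  have kA6 : 4 ≤ A6.card := hA6card.ge
  have kA7 : 3 ≤ A7.card := hA7card.ge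
  -- choose the colors of vertices 0, 4, 2 with the invariant for vertex 6
  have main : ∃ c0 c2 c4, c0 ∈ L 0 ∧ c2 ∈ A2 ∧ c4 ∈ L 4 ∧ c0 ≠ c2 ∧ c2 ≠ c4 ∧
      ¬(A7 ⊆ A6 ∧ c2 ∈ A6 ∧ c2 ∉ A7 ∧ c2 ∉ L 8) := by
    by_cases hQ : A7 ⊆ A6
    · have hone : (A6 \ A7).card = 1 := by
        rw [Finset.card_sdiff_of_subset hQ, hA6card, hA7card]
      obtain ⟨κ, hκ⟩ := Finset.card_eq_one.mp hone
      have hkey : ∀ x, x ∈ A6 → x ∉ A7 → x = κ := by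
        intro x hx1 hx2
        have hx : x ∈ A6 \ A7 := Finset.mem_sdiff.mpr ⟨hx1, hx2⟩
        rw [hκ] at hx
        simpa using hx
      by_cases hk0 : κ ∈ L 0
      · obtain ⟨c4, m4⟩ := Finset.card_pos.mp (show 0 < (L 4).card by omega)
        obtain ⟨c2, m2, h2k, h24⟩ := pick2 kA2 κ c4
        exact ⟨κ, c2, c4, hk0, m2, m4, fun h => h2k h.symm, h24,
          fun ⟨_, hx1, hx2, _⟩ => h2k (hkey c2 hx1 hx2)⟩
      · by_cases hk4 : κ ∈ L 4
        · obtain ⟨c0, m0⟩ := Finset.card_pos.mp (show 0 < (L 0).card by omega)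
          obtain ⟨c2, m2, h20, h2k⟩ := pick2 kA2 c0 κ
          exact ⟨c0, c2, κ, m0, m2, hk4, fun h => h20 h.symm, h2k,
            fun ⟨_, hx1, hx2, _⟩ => h2k (hkey c2 hx1 hx2)⟩
        · by_cases hx : ∃ x ∈ L 0, x ∉ A2
          · obtain ⟨x, hx0, hx2⟩ := hx
            obtain ⟨c4, m4⟩ := Finset.card_pos.mp (show 0 < (L 4).card by omega)
            obtain ⟨c2, m2, h24, h2k⟩ := pick2 kA2 c4 κ
            exact ⟨x, c2, c4, hx0, m2, m4, fun h => hx2 (h ▸ m2), h24,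
              fun ⟨_, hx1', hx2', _⟩ => h2k (hkey c2 hx1' hx2')⟩
          · by_cases hy : ∃ y ∈ L 4, y ∉ A2
            · obtain ⟨y, hy4, hy2⟩ := hy
              obtain ⟨c0, m0⟩ := Finset.card_pos.mp (show 0 < (L 0).card by omega)
              obtain ⟨c2, m2, h20, h2k⟩ := pick2 kA2 c0 κ
              exact ⟨c0, c2, y, m0, m2, hy4, fun h => h20 h.symm,
                fun h => hy2 (h ▸ m2), fun ⟨_, hx1', hx2', _⟩ => h2k (hkey c2 hx1' hx2')⟩
            · push_neg at hx hy
              have hz : ∃ z, z ∈ L 0 ∧ z ∈ L 4 := by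
                by_contra hno
                push_neg at hno
                have hdisj : Disjoint (L 0) (L 4) := Finset.disjoint_left.mpr hno
                have hU : L 0 ∪ L 4 ⊆ A2 := Finset.union_subset hx hy
                have hcard := Finset.card_le_card hU
                rw [Finset.card_union_of_disjoint hdisj, hA2card] at hcard
                omega
              obtain ⟨z, hz0, hz4⟩ := hz
              obtain ⟨c2, m2, h2z, h2k⟩ := pick2 kA2 z κ
              exact ⟨z, c2, z, hz0, m2, hz4, fun h => h2z h.symm, h2z,
                fun ⟨_, hx1', hx2', _⟩ => h2k (hkey c2 hx1' hx2')⟩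
    · obtain ⟨c0, m0⟩ := Finset.card_pos.mp (show 0 < (L 0).card by omega)
      obtain ⟨c4, m4⟩ := Finset.card_pos.mp (show 0 < (L 4).card by omega)
      obtain ⟨c2, m2, h20, h24⟩ := pick2 kA2 c0 c4
      exact ⟨c0, c2, c4, m0, m2, m4, fun h => h20 h.symm, h24, fun ⟨hs, _, _, _⟩ => hQ hs⟩
  obtain ⟨c0, c2, c4, m0, m2, m4, d02, d24, hINV⟩ := main
  obtain ⟨c1, c3, c5, c6, c7, c8, m1, m3, m5, m6, m7, m8,
    d01, d12, d13, d15, d23, d25, d26, d34, d35, d56, d57, d58, d67, d68, d78⟩ :=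
    finish (L 1) (L 3) (L 5) A6 A7 (L 8) h1 h3 h5 kA6 kA7 h8 c0 c2 c4 hINV
  refine ⟨![c0, c1, c2, c3, c4, c5, c6, c7, c8], ?_, ?_⟩
  · intro v
    fin_cases v
    · exact m0
    · exact m1
    · exact hA2sub m2
    · exact m3
    · exact m4
    · exact m5
    · exact hA6sub m6
    · exact hA7sub m7
    · exact m8
  · intro u v huv hadj
    rcases pairs_lemma u v huv hadj with
      ⟨rfl, rfl⟩ | ⟨rfl, rfl⟩ | ⟨rfl, rfl⟩ | ⟨rfl, rfl⟩ | ⟨rfl, rfl⟩ | ⟨rfl, rfl⟩ |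
      ⟨rfl, rfl⟩ | ⟨rfl, rfl⟩ | ⟨rfl, rfl⟩ | ⟨rfl, rfl⟩ | ⟨rfl, rfl⟩ | ⟨rfl, rfl⟩ |
      ⟨rfl, rfl⟩ | ⟨rfl, rfl⟩ | ⟨rfl, rfl⟩ | ⟨rfl, rfl⟩ | ⟨rfl, rfl⟩ | ⟨rfl, rfl⟩ |
      ⟨rfl, rfl⟩ | ⟨rfl, rfl⟩ | ⟨rfl, rfl⟩ | ⟨rfl, rfl⟩ | ⟨rfl, rfl⟩ | ⟨rfl, rfl⟩ |
      ⟨rfl, rfl⟩ | ⟨rfl, rfl⟩ | ⟨rfl, rfl⟩ | ⟨rfl, rfl⟩ | ⟨rfl, rfl⟩ | ⟨rfl, rfl⟩ |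
      ⟨rfl, rfl⟩ | ⟨rfl, rfl⟩ | ⟨rfl, rfl⟩ | ⟨rfl, rfl⟩
    · exact d01
    · exact d01.symm
    · exact d02
    · exact d02.symm
    · exact d12
    · exact d12.symm
    · exact d13
    · exact d13.symm
    · exact d15
    · exact d15.symm
    · exact d23
    · exact d23.symm
    · exact d24
    · exact d24.symm
    · exact d25
    · exact d25.symm
    · exact d26
    · exact d26.symm
    · exact d34
    · exact d34.symm
    · exact d35
    · exact d35.symm
    · exact d56
    · exact d56.symm
    · exact d57
    · exact d57.symm
    · exact d58
    · exact d58.symm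
    · exact d67
    · exact d67.symm
    · exact d68
    · exact d68.symm
    · exact d78
    · exact d78.symm
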